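/- Fix h > 0, λ > 0, p > 0. Let φ : ℝ × ℤ → ℂ and a₂ : ℝ × ℤ → ℝ be differentiable in t at each n, and let a₀ : ℝ × ℤ → ℝ, a₁ : ℝ × ℤ → ℝ be arbitrary. Suppose that for all t ∈ ℝ and n ∈ ℤ: (i) i·(∂ₜφ(t,n) − i a₀(t,n) φ(t,n)) + D₁⁻D₁⁺φ(t,n) − a₂(t,n)² φ(t,n) + λ|φ(t,n)|^{2p} φ(t,n) = 0, with covariant derivatives taken with gauge a₁(t,·); and (ii) ∂ₜa₂(t,n) = −Im( conj(φ(t,n−1)) D₁⁺φ(t,n−1) ). If the constraint (a₂(0,n+1) − a₂(0,n))/h = (1/2)|φ(0,n)|² holds for all n ∈ ℤ, then (a₂(t,n+1) − a₂(t,n))/h = (1/2)|φ(t,n)|² holds for all t ∈ ℝ and all n ∈ ℤ. -/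

import Mathlib

/-- Discrete forward covariant derivative `D₁⁺φ(n) = (e^{−i h a(n)} φ(n+1) − φ(n))/h`,
where `a(n)` is the gauge component `A₁` at the half-site `n + 1/2`. -/
noncomputable def D1p (h : ℝ) (a : ℤ → ℝ) (φ : ℤ → ℂ) (n : ℤ) : ℂ :=
  (Complex.exp (-Complex.I * h * a n) * φ (n + 1) - φ n) / h

/-- Discrete backward covariant derivative `D₁⁻φ(n) = (φ(n) − e^{i h a(n−1)} φ(n−1))/h`. -/
noncomputable def D1m (h : ℝ) (a : ℤ → ℝ) (φ : ℤ → ℂ) (n : ℤ) : ℂ :=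
  (φ n - Complex.exp (Complex.I * h * a (n - 1)) * φ (n - 1)) / h

/-- **Preservation of the Gauss-law constraint** `∇₁⁺A₂ = ½|φ|²` under the time
evolution of the discrete Chern–Simons–Schrödinger system. -/
lemma css_aux (ψ' D ψ : ℂ) (b c l N : ℝ)
    (e : Complex.I * (ψ' - Complex.I * (b:ℂ) * ψ) + D - (c:ℂ) ^ 2 * ψ + (l:ℂ) * (N:ℂ) * ψ = 0) :
    ((starRingEnd ℂ) ψ * ψ').re = -((starRingEnd ℂ) ψ * D).im := by
  have h1 := congrArg Complex.re e
  have h2 := congrArg Complex.im e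
  simp [Complex.add_re, Complex.add_im, Complex.sub_re, Complex.sub_im, Complex.mul_re,
    Complex.mul_im, Complex.I_re, Complex.I_im, Complex.ofReal_re, Complex.ofReal_im,
    pow_two] at h1 h2
  simp only [Complex.mul_re, Complex.mul_im, Complex.conj_re, Complex.conj_im, neg_sub, neg_mul]
  linear_combination ψ.re * h2 - ψ.im * h1

lemma css_imag_identity (h : ℝ) (hh : h ≠ 0) (a : ℤ → ℝ) (φ : ℤ → ℂ) (n : ℤ) :
    ((starRingEnd ℂ) (φ n) * D1m h a (D1p h a φ) n).im
      = (((starRingEnd ℂ) (φ n) * D1p h a φ n).im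
        - ((starRingEnd ℂ) (φ (n - 1)) * D1p h a φ (n - 1)).im) / h := by
  have hE : Complex.exp (Complex.I * h * a (n - 1))
      = (starRingEnd ℂ) (Complex.exp (-Complex.I * h * a (n - 1))) := by
    rw [← Complex.exp_conj]
    congr 1
    simp [map_mul, Complex.conj_I, Complex.conj_ofReal]
  simp only [D1m, D1p, hE]
  have hn : n - 1 + 1 = n := by ring
  rw [hn]
  set E := Complex.exp (-Complex.I * h * a (n - 1)) with hEdef
  simp only [Complex.div_im, Complex.div_re, Complex.sub_im, Complex.sub_re, Complex.mul_im,
    Complex.mul_re, Complex.conj_re, Complex.conj_im, Complex.ofReal_re, Complex.ofReal_im,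
    map_sub, map_mul, map_div₀, RingHom.id_apply, Complex.conj_conj, Complex.normSq_ofReal]
  field_simp
  ring

theorem discrete_CSS_constraint_preservation
    (h lam p : ℝ) (hh : 0 < h) (hlam : 0 < lam) (hp : 0 < p)
    (φ : ℝ → ℤ → ℂ) (a₀ a₁ a₂ : ℝ → ℤ → ℝ)
    (hφdiff : ∀ n : ℤ, Differentiable ℝ (fun t => φ t n))
    (ha₂diff : ∀ n : ℤ, Differentiable ℝ (fun t => a₂ t n))
    (heq1 : ∀ (t : ℝ) (n : ℤ),
      Complex.I * (deriv (fun s => φ s n) t - Complex.I * (a₀ t n : ℂ) * φ t n)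
        + D1m h (a₁ t) (D1p h (a₁ t) (φ t)) n
        - ((a₂ t n : ℂ)) ^ 2 * φ t n
        + (lam : ℂ) * ((‖φ t n‖ ^ (2 * p) : ℝ) : ℂ) * φ t n = 0)
    (heq2 : ∀ (t : ℝ) (n : ℤ),
      deriv (fun s => a₂ s n) t
        = -((starRingEnd ℂ) (φ t (n - 1)) * D1p h (a₁ t) (φ t) (n - 1)).im)
    (hinit : ∀ n : ℤ, (a₂ 0 (n + 1) - a₂ 0 n) / h = (1 / 2) * ‖φ 0 n‖ ^ 2) :
    ∀ (t : ℝ) (n : ℤ), (a₂ t (n + 1) - a₂ t n) / h = (1 / 2) * ‖φ t n‖ ^ 2 := by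

  intro t n
  have hne : h ≠ 0 := ne_of_gt hh
  set g : ℝ → ℝ := fun s => (a₂ s (n + 1) - a₂ s n) / h - (1 / 2) * ‖φ s n‖ ^ 2
    with hg
  have key : ∀ s : ℝ, HasDerivAt g 0 s := by
    intro s
    -- derivative of the |φ|² part
    have hψd : HasDerivAt (fun u => φ u n) (deriv (fun u => φ u n) s) s :=
      (hφdiff n s).hasDerivAt
    have hre : HasDerivAt (fun u => (φ u n).re) (deriv (fun u => φ u n) s).re s :=
      Complex.reCLM.hasFDerivAt.comp_hasDerivAt s hψd
    have him : HasDerivAt (fun u => (φ u n).im) (deriv (fun u => φ u n) s).im s :=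
      Complex.imCLM.hasFDerivAt.comp_hasDerivAt s hψd
    have habs : HasDerivAt (fun u => ‖φ u n‖ ^ 2)
        (2 * ((starRingEnd ℂ) (φ s n) * deriv (fun u => φ u n) s).re) s := by
      have h1 : HasDerivAt (fun u => (φ u n).re ^ 2 + (φ u n).im ^ 2)
          (2 * (φ s n).re * (deriv (fun u => φ u n) s).re
            + 2 * (φ s n).im * (deriv (fun u => φ u n) s).im) s := by
        have := ((hre.fun_pow 2).fun_add (him.fun_pow 2))
        refine this.congr_deriv ?_
        ring
      have heqf : (fun u => ‖φ u n‖ ^ 2)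
          = fun u => (φ u n).re ^ 2 + (φ u n).im ^ 2 := by
        funext u
        rw [Complex.sq_norm, Complex.normSq_apply]
        ring
      rw [heqf]
      convert h1 using 1
      simp [Complex.mul_re, Complex.conj_re, Complex.conj_im]
      ring
    have h1 : HasDerivAt (fun u => a₂ u (n + 1)) (deriv (fun u => a₂ u (n + 1)) s) s :=
      (ha₂diff (n + 1) s).hasDerivAt
    have h2 : HasDerivAt (fun u => a₂ u n) (deriv (fun u => a₂ u n) s) s :=
      (ha₂diff n s).hasDerivAt
    have hG : HasDerivAt g
        ((deriv (fun u => a₂ u (n + 1)) s - deriv (fun u => a₂ u n) s) / h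
          - (1 / 2) * (2 * ((starRingEnd ℂ) (φ s n) * deriv (fun u => φ u n) s).re)) s :=
      ((h1.sub h2).div_const h).sub (habs.const_mul (1 / 2))
    have hzero : (deriv (fun u => a₂ u (n + 1)) s - deriv (fun u => a₂ u n) s) / h
          - (1 / 2) * (2 * ((starRingEnd ℂ) (φ s n) * deriv (fun u => φ u n) s).re) = 0 := by
      have e1 := heq2 s (n + 1)
      have e2 := heq2 s n
      have hsimp : n + 1 - 1 = n := by ring
      rw [hsimp] at e1
      have e3 := css_aux (deriv (fun u => φ u n) s)
        (D1m h (a₁ s) (D1p h (a₁ s) (φ s)) n) (φ s n)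
        (a₀ s n) (a₂ s n) lam (‖φ s n‖ ^ (2 * p)) (heq1 s n)
      have e4 := css_imag_identity h hne (a₁ s) (φ s) n
      rw [e1, e2, e3, e4]
      field_simp
      ring
    rwa [hzero] at hG
  have hconst : g t = g 0 :=
    is_const_of_deriv_eq_zero (fun s => (key s).differentiableAt)
      (fun s => (key s).deriv) t 0
  have h0 : g 0 = 0 := by
    simp only [hg]
    rw [hinit n]
    ring
  have := hconst.trans h0
  simp only [hg] at this
  linarith [this]
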